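/- arXiv:2012.06846 — 3 statements merged into one kernel-verified Lean document; each statement's English description precedes it below -/
import Mathlib

section
/- Let n, m, s be positive integers. Let f range over ℝⁿ. Assume a SUN_{n,s}(ξ,Ω,Δ,γ,Γ) prior density on f and the Gaussian likelihood L(f) := φ_m(Y − C f; R). Then for every f ∈ ℝⁿ the (unnormalized) posterior factorizes exactly as φ_m(Y − C f; R) · sun_{n,s}(f; ξ,Ω,Δ,γ,Γ) = φ_m(Y − Cξ; C Ω Cᵀ + R) · (Φ_s(γ_p; Γ_p)/Φ_s(γ; Γ)) · sun_{n,s}(f; ξ_p, Ω_p, Δ_p, γ_p, Γ_p); in particular the posterior density of f is the unified skew-normal density SUN_{n,s}(ξ_p, Ω_p, Δ_p, γ_p, Γ_p). (Lemma 1 of the paper.) -/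
open MeasureTheory Matrix

/-- Centered multivariate normal density `φ(z; S)` with covariance `S`. -/
noncomputable def gaussPdf {ι : Type*} [Fintype ι] [DecidableEq ι]
    (S : Matrix ι ι ℝ) (z : ι → ℝ) : ℝ :=
  (2 * Real.pi) ^ (-(Fintype.card ι : ℝ) / 2) * S.det ^ (-(1 : ℝ) / 2) *
    Real.exp (-(1 / 2) * (z ⬝ᵥ (S⁻¹ *ᵥ z)))

/-- Centered multivariate normal CDF `Φ(a; S)` with covariance `S`. -/
noncomputable def gaussCdf {ι : Type*} [Fintype ι] [DecidableEq ι]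
    (S : Matrix ι ι ℝ) (a : ι → ℝ) : ℝ :=
  ∫ u in {u : ι → ℝ | ∀ i, u i ≤ a i}, gaussPdf S u

/-- `D_K`: diagonal matrix with entries `√(K i i)`. -/
noncomputable def dMat {ι : Type*} [Fintype ι] [DecidableEq ι]
    (K : Matrix ι ι ℝ) : Matrix ι ι ℝ :=
  Matrix.diagonal fun i => Real.sqrt (K i i)

/-- `K̄ := D_K⁻¹ K D_K⁻¹`: the correlation matrix associated with `K`. -/
noncomputable def corrMat {ι : Type*} [Fintype ι] [DecidableEq ι]
    (K : Matrix ι ι ℝ) : Matrix ι ι ℝ :=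
  (dMat K)⁻¹ * K * (dMat K)⁻¹

/-- The unified skew-normal density `sun(z; ξ, Ω, Δ, γ, Γ)`. -/
noncomputable def sunPdf {ι κ : Type*} [Fintype ι] [DecidableEq ι] [Fintype κ] [DecidableEq κ]
    (xi : ι → ℝ) (Om : Matrix ι ι ℝ) (De : Matrix ι κ ℝ) (ga : κ → ℝ) (Ga : Matrix κ κ ℝ)
    (z : ι → ℝ) : ℝ :=
  gaussPdf Om (z - xi) *
    gaussCdf (Ga - Deᵀ * (corrMat Om)⁻¹ * De)
      (ga + (Deᵀ * (corrMat Om)⁻¹ * (dMat Om)⁻¹) *ᵥ (z - xi)) /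
    gaussCdf Ga ga

set_option linter.unusedSectionVars false
set_option maxHeartbeats 1000000

section Helpers
variable {ι : Type*} [Fintype ι] [DecidableEq ι] {K : Matrix ι ι ℝ}

lemma posDef_transpose_eq (hK : K.PosDef) : Kᵀ = K := by
  have h := hK.1
  rwa [Matrix.IsHermitian, conjTranspose_eq_transpose_of_trivial] at h

lemma posDef_isUnit_det (hK : K.PosDef) : IsUnit K.det :=
  isUnit_iff_ne_zero.mpr hK.det_pos.ne'

lemma posDef_mul_inv (hK : K.PosDef) : K * K⁻¹ = 1 :=
  mul_nonsing_inv _ (posDef_isUnit_det hK)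

lemma posDef_inv_mul (hK : K.PosDef) : K⁻¹ * K = 1 :=
  nonsing_inv_mul _ (posDef_isUnit_det hK)

lemma posDef_inv_transpose_eq (hK : K.PosDef) : (K⁻¹)ᵀ = K⁻¹ := by
  rw [Matrix.transpose_nonsing_inv, posDef_transpose_eq hK]

lemma dot_mulVec_trans {κ : Type*} [Fintype κ] (A : Matrix ι κ ℝ) (x : ι → ℝ) (y : κ → ℝ) :
    (x ⬝ᵥ A *ᵥ y) = (Aᵀ *ᵥ x) ⬝ᵥ y := by
  rw [dotProduct_mulVec, mulVec_transpose]

lemma dot_mulVec_symm {A : Matrix ι ι ℝ} (hA : Aᵀ = A) (u v : ι → ℝ) :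
    u ⬝ᵥ A *ᵥ v = v ⬝ᵥ A *ᵥ u := by
  rw [dot_mulVec_trans, hA, dotProduct_comm]

lemma posDef_conj (hK : K.PosDef) {B : Matrix ι ι ℝ} (hB : IsUnit B.det) :
    (B * K * Bᵀ).PosDef := by
  refine Matrix.PosDef.of_dotProduct_mulVec_pos ?_ ?_
  · rw [Matrix.IsHermitian, conjTranspose_eq_transpose_of_trivial]
    rw [Matrix.transpose_mul, Matrix.transpose_mul, transpose_transpose, posDef_transpose_eq hK,
      ← Matrix.mul_assoc]
  · intro x hx
    have hy : Bᵀ *ᵥ x ≠ 0 := by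
      intro h
      have hinj : Function.Injective (Bᵀ).mulVec :=
        mulVec_injective_iff_isUnit.mpr
          ((Matrix.isUnit_iff_isUnit_det _).mpr (by rwa [Matrix.det_transpose]))
      exact hx (hinj (by simp [h] : Bᵀ *ᵥ x = Bᵀ *ᵥ 0))
    have := hK.dotProduct_mulVec_pos hy
    simpa [star_trivial, ← mulVec_mulVec, dot_mulVec_trans, Matrix.mul_assoc] using
      (by simpa [star_trivial] using this : 0 < (Bᵀ *ᵥ x) ⬝ᵥ K *ᵥ (Bᵀ *ᵥ x))

lemma posDef_diag_pos (hK : K.PosDef) (i : ι) : 0 < K i i := by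
  have := hK.dotProduct_mulVec_pos (x := Pi.single i 1) (by
    intro h; have := congrFun h i; simp at this)
  simpa [dotProduct, mulVec, Pi.single_apply] using this

lemma dMat_det_isUnit (hK : K.PosDef) : IsUnit (dMat K).det := by
  rw [dMat, det_diagonal]
  exact (Finset.prod_pos (fun i _ => Real.sqrt_pos.mpr (posDef_diag_pos hK i))).ne'.isUnit

lemma dMat_transpose : (dMat K)ᵀ = dMat K := diagonal_transpose _

lemma dMat_mul_inv (hK : K.PosDef) : dMat K * (dMat K)⁻¹ = 1 :=
  mul_nonsing_inv _ (dMat_det_isUnit hK)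

lemma inv_mul_dMat (hK : K.PosDef) : (dMat K)⁻¹ * dMat K = 1 :=
  nonsing_inv_mul _ (dMat_det_isUnit hK)

lemma corrMat_inv (hK : K.PosDef) : (corrMat K)⁻¹ = dMat K * K⁻¹ * dMat K := by
  rw [corrMat, Matrix.mul_inv_rev, Matrix.mul_inv_rev,
    Matrix.nonsing_inv_nonsing_inv _ (dMat_det_isUnit hK), Matrix.mul_assoc]

lemma corrMat_inv_mul_dMat_inv (hK : K.PosDef) :
    (corrMat K)⁻¹ * (dMat K)⁻¹ = dMat K * K⁻¹ := by
  rw [corrMat_inv hK, Matrix.mul_assoc, dMat_mul_inv hK, Matrix.mul_one]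

lemma corrMat_posDef (hK : K.PosDef) : (corrMat K).PosDef := by
  have h := posDef_conj hK (B := (dMat K)⁻¹)
    (by rw [Matrix.det_nonsing_inv]; exact (dMat_det_isUnit hK).ringInverse)
  rw [corrMat]
  rwa [transpose_nonsing_inv, dMat_transpose] at h

lemma corrMat_transpose_eq (hK : K.PosDef) : (corrMat K)ᵀ = corrMat K :=
  posDef_transpose_eq (corrMat_posDef hK)

lemma corrMat_inv_transpose_eq (hK : K.PosDef) : ((corrMat K)⁻¹)ᵀ = (corrMat K)⁻¹ :=
  posDef_inv_transpose_eq (corrMat_posDef hK)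

lemma dMat_inv_transpose_eq : ((dMat K)⁻¹)ᵀ = (dMat K)⁻¹ := by
  rw [Matrix.transpose_nonsing_inv, dMat_transpose]

end Helpers

section Schur
variable {m' s' : Type*} [Fintype m'] [DecidableEq m'] [Fintype s'] [DecidableEq s']

lemma schur_posDef (A : Matrix s' s' ℝ) (B : Matrix s' m' ℝ) (D : Matrix m' m' ℝ)
    (hD : D.PosDef) (h : (Matrix.fromBlocks A B Bᵀ D).PosDef) :
    (A - B * D⁻¹ * Bᵀ).PosDef := by
  haveI : Invertible D := D.invertibleOfIsUnitDet (isUnit_iff_ne_zero.mpr hD.det_pos.ne')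
  have hBt : Bᵀ = Bᴴ := (conjTranspose_eq_transpose_of_trivial B).symm
  rw [hBt] at h ⊢
  refine Matrix.PosDef.of_dotProduct_mulVec_pos ?_ ?_
  · exact (Matrix.IsHermitian.fromBlocks₂₂ A B hD.1).mp h.1
  · intro x hx
    set y : m' → ℝ := -((D⁻¹ * Bᴴ) *ᵥ x) with hy
    have hv : Sum.elim x y ≠ 0 := by
      intro hc
      exact hx (funext fun i => congrFun hc (Sum.inl i))
    have hpos := h.dotProduct_mulVec_pos hv
    rw [dotProduct_mulVec, Matrix.schur_complement_eq₂₂ A B x y hD.1] at hpos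
    have hzero : (D⁻¹ * Bᴴ) *ᵥ x + y = 0 := by rw [hy]; abel
    rw [hzero] at hpos
    simpa [dotProduct_mulVec] using hpos
end Schur

section CdfPos
variable {ι : Type*} [Fintype ι] [DecidableEq ι] {S : Matrix ι ι ℝ}

lemma mulVec_sq_sum_le (A : Matrix ι ι ℝ) (v : ι → ℝ) :
    ∑ i, ((A *ᵥ v) i)^2 ≤ (∑ i, ∑ j, A i j ^ 2) * ∑ j, v j ^ 2 := by
  rw [Finset.sum_mul]
  apply Finset.sum_le_sum; intro i _
  simpa [mulVec, dotProduct] using Finset.sum_mul_sq_le_sq_mul_sq Finset.univ (A i) v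

open scoped MatrixOrder in
lemma posDef_coercive (hS : S.PosDef) :
    ∃ c : ℝ, 0 ≤ c ∧ ∀ u : ι → ℝ, ∑ i, u i ^ 2 ≤ c * (u ⬝ᵥ S *ᵥ u) := by
  have P := hS.posSemidef
  set Q := CFC.sqrt S with hQdef
  have hQQ : Q * Q = S := CFC.sqrt_mul_sqrt_self S P.nonneg
  have hQsymm : Qᵀ = Q := by
    have h := (CFC.sqrt_nonneg S).posSemidef.isHermitian
    rwa [Matrix.IsHermitian, conjTranspose_eq_transpose_of_trivial] at h
  have hdetQ : IsUnit Q.det := by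
    have h2 : Q.det * Q.det = S.det := by rw [← det_mul, hQQ]
    have hd := hS.det_pos
    refine isUnit_iff_ne_zero.mpr (fun h => ?_)
    rw [h, mul_zero] at h2; exact hd.ne (by rw [h2])
  refine ⟨∑ i, ∑ j, (Q⁻¹) i j ^ 2,
    Finset.sum_nonneg fun i _ => Finset.sum_nonneg fun j _ => sq_nonneg _, fun u => ?_⟩
  have h1 : u = Q⁻¹ *ᵥ (Q *ᵥ u) := by
    rw [mulVec_mulVec, nonsing_inv_mul _ hdetQ, one_mulVec]
  have h2 : u ⬝ᵥ S *ᵥ u = ∑ i, ((Q *ᵥ u) i)^2 := by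
    conv_lhs => rw [← hQQ, ← mulVec_mulVec, dotProduct_mulVec, ← mulVec_transpose, hQsymm]
    simp [dotProduct, sq]
  rw [h2]
  calc ∑ i, u i ^ 2 = ∑ i, ((Q⁻¹ *ᵥ (Q *ᵥ u)) i)^2 := by rw [← h1]
    _ ≤ _ := mulVec_sq_sum_le _ _

lemma gaussPdf_pos (hS : S.PosDef) (u : ι → ℝ) : 0 < gaussPdf S u := by
  unfold gaussPdf
  exact mul_pos (mul_pos (Real.rpow_pos_of_pos (by positivity) _)
    (Real.rpow_pos_of_pos hS.det_pos _)) (Real.exp_pos _)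

lemma gaussPdf_continuous (hS : S.PosDef) : Continuous (gaussPdf S) := by
  unfold gaussPdf
  apply Continuous.mul continuous_const
  apply Real.continuous_exp.comp
  apply Continuous.mul continuous_const
  unfold dotProduct mulVec dotProduct
  fun_prop

lemma gaussPdf_integrable (hS : S.PosDef) : Integrable (gaussPdf S) := by
  obtain ⟨c, hc, hcoer⟩ := posDef_coercive hS.inv
  set b : ℝ := (2 * (c + 1))⁻¹ with hb
  have hbpos : 0 < b := by positivity
  set c0 : ℝ := (2 * Real.pi) ^ (-(Fintype.card ι : ℝ) / 2) * S.det ^ (-(1 : ℝ) / 2) with hc0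
  have hc0pos : 0 < c0 :=
    mul_pos (Real.rpow_pos_of_pos (by positivity) _) (Real.rpow_pos_of_pos hS.det_pos _)
  have hg : Integrable (fun u : ι → ℝ => c0 * ∏ i, Real.exp (-b * (u i)^2)) :=
    (Integrable.fintype_prod (f := fun (_ : ι) (x : ℝ) => Real.exp (-b * x^2))
      (fun i => integrable_exp_neg_mul_sq hbpos)).const_mul c0
  apply hg.mono' (gaussPdf_continuous hS).aestronglyMeasurable
  refine Filter.Eventually.of_forall fun u => ?_
  have hq : 0 ≤ u ⬝ᵥ S⁻¹ *ᵥ u := by simpa [star_trivial] using hS.inv.posSemidef.dotProduct_mulVec_nonneg u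
  have key : -(1/2 : ℝ) * (u ⬝ᵥ S⁻¹ *ᵥ u) ≤ -b * ∑ i, (u i)^2 := by
    have h1 : ∑ i, u i ^ 2 ≤ c * (u ⬝ᵥ S⁻¹ *ᵥ u) := hcoer u
    rw [hb, neg_mul, neg_mul, neg_le_neg_iff, inv_mul_le_iff₀ (by positivity)]
    nlinarith
  have hle : gaussPdf S u ≤ c0 * ∏ i, Real.exp (-b * (u i)^2) := by
    unfold gaussPdf
    rw [← hc0, ← Real.exp_sum]
    have hs : ∑ i, -b * (u i)^2 = -b * ∑ i, (u i)^2 := by rw [Finset.mul_sum]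
    rw [hs]
    exact mul_le_mul_of_nonneg_left (Real.exp_le_exp.mpr key) hc0pos.le
  calc ‖gaussPdf S u‖ = gaussPdf S u := Real.norm_of_nonneg (gaussPdf_pos hS u).le
    _ ≤ _ := hle

lemma gaussCdf_pos (hS : S.PosDef) (a : ι → ℝ) : 0 < gaussCdf S a := by
  rw [gaussCdf, setIntegral_pos_iff_support_of_nonneg_ae
    (Filter.Eventually.of_forall fun u => (gaussPdf_pos hS u).le)
    (gaussPdf_integrable hS).integrableOn]
  have hsupp : Function.support (gaussPdf S) = Set.univ :=
    Set.eq_univ_of_forall fun u => (gaussPdf_pos hS u).ne'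
  rw [hsupp, Set.univ_inter]
  have hsub : (Set.univ.pi fun i => Set.Icc (a i - 1) (a i)) ⊆ {u : ι → ℝ | ∀ i, u i ≤ a i} :=
    fun u hu i => (hu i (Set.mem_univ i)).2
  refine lt_of_lt_of_le ?_ (measure_mono hsub)
  rw [volume_pi_pi]
  simp [Real.volume_Icc]
end CdfPos

lemma div_assembly {a p A q k u w : ℝ} (hw : w ≠ 0) (h : a * p = A * q) :
    a * (p * k) / u = A * (w / u) * (q * k) / w := by
  have h2 : A * (w / u) * (q * k) / w = A * q * k / u := by
    calc A * (w / u) * (q * k) / w = (A * q * k) * (w / w) / u := by ring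
      _ = A * q * k / u := by rw [div_self hw, mul_one]
  rw [h2, ← h, mul_assoc]

/-- Lemma 1: the SUN prior is conjugate to the Gaussian likelihood. -/
theorem sun_gaussian_conjugate
    {n m s : ℕ} (hn : 0 < n) (hm : 0 < m) (hs : 0 < s)
    (xi : Fin n → ℝ) (Om : Matrix (Fin n) (Fin n) ℝ) (hOm : Om.PosDef)
    (De : Matrix (Fin n) (Fin s) ℝ) (ga : Fin s → ℝ)
    (Ga : Matrix (Fin s) (Fin s) ℝ) (hGa : Ga.IsSymm)
    (hM : (Matrix.fromBlocks Ga Deᵀ De (corrMat Om)).PosDef)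
    (C : Matrix (Fin m) (Fin n) ℝ) (R : Matrix (Fin m) (Fin m) ℝ) (hR : R.PosDef)
    (Y : Fin m → ℝ)
    (xip : Fin n → ℝ) (Omp : Matrix (Fin n) (Fin n) ℝ)
    (Dep : Matrix (Fin n) (Fin s) ℝ) (gap : Fin s → ℝ) (Gap : Matrix (Fin s) (Fin s) ℝ)
    (hxip : xip = xi + (Om * Cᵀ * (C * Om * Cᵀ + R)⁻¹) *ᵥ (Y - C *ᵥ xi))
    (hOmp : Omp = Om - Om * Cᵀ * (C * Om * Cᵀ + R)⁻¹ * C * Om)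
    (hDep : Dep = corrMat Omp * dMat Omp * (dMat Om)⁻¹ * (corrMat Om)⁻¹ * De)
    (hgap : gap = ga + (Deᵀ * (corrMat Om)⁻¹ * (dMat Om)⁻¹) *ᵥ (xip - xi))
    (hGap : Gap = Ga - Deᵀ * (corrMat Om)⁻¹ * De + Depᵀ * (corrMat Omp)⁻¹ * Dep) :
    ∀ f : Fin n → ℝ,
      gaussPdf R (Y - C *ᵥ f) * sunPdf xi Om De ga Ga f =
        gaussPdf (C * Om * Cᵀ + R) (Y - C *ᵥ xi) *
          (gaussCdf Gap gap / gaussCdf Ga ga) * sunPdf xip Omp Dep gap Gap f := by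
  intro f
  -- setup
  set Sm : Matrix (Fin m) (Fin m) ℝ := C * Om * Cᵀ + R with hSm
  have hCOCT : (C * Om * Cᵀ).PosSemidef := by
    have h := hOm.posSemidef.mul_mul_conjTranspose_same C
    rwa [conjTranspose_eq_transpose_of_trivial] at h
  have hS : Sm.PosDef := Matrix.PosDef.posSemidef_add hCOCT hR
  have hCRC : (Cᵀ * R⁻¹ * C).PosSemidef := by
    have h := hR.inv.posSemidef.conjTranspose_mul_mul_same C
    rwa [conjTranspose_eq_transpose_of_trivial] at h
  set M : Matrix (Fin n) (Fin n) ℝ := Om⁻¹ + Cᵀ * R⁻¹ * C with hMdef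
  have hMpos : M.PosDef := hOm.inv.add_posSemidef hCRC
  -- Sm - R = C * Om * Cᵀ
  have e1 : C * Om * Cᵀ = Sm - R := (add_sub_cancel_right _ _).symm
  have e2 : Om * Cᵀ * Sm⁻¹ * (C * Om * Cᵀ) = Om * Cᵀ - Om * Cᵀ * Sm⁻¹ * R := by
    rw [e1, Matrix.mul_sub, Matrix.mul_assoc (Om * Cᵀ) Sm⁻¹ Sm,
      nonsing_inv_mul _ (posDef_isUnit_det hS), Matrix.mul_one]
  -- Omp * M = 1
  have hOmpM : Omp * M = 1 := by
    have step1 : Omp * M =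
        Om * Om⁻¹ + Om * Cᵀ * (R⁻¹ * C) - Om * Cᵀ * Sm⁻¹ * C * (Om * Om⁻¹)
          - Om * Cᵀ * Sm⁻¹ * (C * Om * Cᵀ) * (R⁻¹ * C) := by
      rw [hOmp, hMdef]
      simp only [Matrix.sub_mul, Matrix.mul_sub, Matrix.add_mul, Matrix.mul_add,
        Matrix.mul_assoc]
      abel
    rw [step1, posDef_mul_inv hOm, Matrix.mul_one, e2]
    have step2 : Om * Cᵀ * Sm⁻¹ * R * (R⁻¹ * C) = Om * Cᵀ * Sm⁻¹ * C := by
      rw [Matrix.mul_assoc (Om * Cᵀ * Sm⁻¹) R, ← Matrix.mul_assoc R,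
        posDef_mul_inv hR, Matrix.one_mul]
    rw [Matrix.sub_mul, step2]
    abel
  have hOmpInv : Omp⁻¹ = M := inv_eq_right_inv hOmpM
  have hOmpEq : Omp = M⁻¹ := (inv_eq_left_inv hOmpM).symm
  have hOmpPos : Omp.PosDef := by rw [hOmpEq]; exact hMpos.inv
  -- determinant identity
  have hdet : Sm.det * Omp.det = R.det * Om.det := by
    have hsm : Sm = R * (1 + (R⁻¹ * C) * (Om * Cᵀ)) := by
      have : R * (1 + (R⁻¹ * C) * (Om * Cᵀ)) = R + (R * R⁻¹) * (C * (Om * Cᵀ)) := by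
        simp only [Matrix.mul_add, Matrix.mul_one, Matrix.mul_assoc]
      rw [this, posDef_mul_inv hR, Matrix.one_mul, hSm, ← Matrix.mul_assoc]
      abel
    have hOmM : Om * M = 1 + (Om * Cᵀ) * (R⁻¹ * C) := by
      rw [hMdef, Matrix.mul_add, posDef_mul_inv hOm]
      simp only [Matrix.mul_assoc]
    have hdS : Sm.det = R.det * (Om.det * M.det) := by
      rw [hsm, det_mul, Matrix.det_one_add_mul_comm (R⁻¹ * C) (Om * Cᵀ), ← hOmM, det_mul]
    have hdOmp : Omp.det = (M.det)⁻¹ := by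
      rw [hOmpEq, Matrix.det_nonsing_inv, Ring.inverse_eq_inv']
    rw [hdS, hdOmp]
    field_simp [hMpos.det_pos.ne']
  -- symmetry facts
  have hRinvT : (R⁻¹)ᵀ = R⁻¹ := posDef_inv_transpose_eq hR
  have hSinvT : (Sm⁻¹)ᵀ = Sm⁻¹ := posDef_inv_transpose_eq hS
  have hMT : Mᵀ = M := posDef_transpose_eq hMpos
  -- vectors
  set e : Fin n → ℝ := f - xi with he
  set r : Fin m → ℝ := Y - C *ᵥ xi with hr
  set b : Fin n → ℝ := (Om * Cᵀ * Sm⁻¹) *ᵥ r with hb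
  have hfe : Y - C *ᵥ f = r - C *ᵥ e := by
    rw [hr, he, mulVec_sub]; abel
  have hfxip : f - xip = e - b := by
    rw [hxip, he, hb, hr]; abel
  -- quadratic form atoms
  have hMbmat : M * (Om * Cᵀ * Sm⁻¹) = Cᵀ * R⁻¹ := by
    have step1 : M * (Om * Cᵀ * Sm⁻¹) =
        (Om⁻¹ * Om) * (Cᵀ * Sm⁻¹) + Cᵀ * (R⁻¹ * ((C * Om * Cᵀ) * Sm⁻¹)) := by
      rw [hMdef]
      simp only [Matrix.add_mul, Matrix.mul_assoc]
    rw [step1, posDef_inv_mul hOm, Matrix.one_mul, e1, Matrix.sub_mul,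
      mul_nonsing_inv _ (posDef_isUnit_det hS)]
    have : R⁻¹ * (1 - R * Sm⁻¹) = R⁻¹ - (R⁻¹ * R) * Sm⁻¹ := by
      simp only [Matrix.mul_sub, Matrix.mul_one, Matrix.mul_assoc]
    rw [this, posDef_inv_mul hR, Matrix.one_mul, Matrix.mul_sub]
    abel
  have hMb : M *ᵥ b = Cᵀ *ᵥ (R⁻¹ *ᵥ r) := by
    rw [hb, mulVec_mulVec, hMbmat, ← mulVec_mulVec]
  have hCb : C *ᵥ b = r - (R * Sm⁻¹) *ᵥ r := by
    rw [hb, mulVec_mulVec]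
    have : C * (Om * Cᵀ * Sm⁻¹) = (C * Om * Cᵀ) * Sm⁻¹ := by
      simp only [Matrix.mul_assoc]
    rw [this, e1, Matrix.sub_mul, mul_nonsing_inv _ (posDef_isUnit_det hS), sub_mulVec,
      one_mulVec]
  have A1 : e ⬝ᵥ M *ᵥ b = (C *ᵥ e) ⬝ᵥ R⁻¹ *ᵥ r := by
    rw [hMb, dot_mulVec_trans, transpose_transpose]
  have A2 : b ⬝ᵥ M *ᵥ e = (C *ᵥ e) ⬝ᵥ R⁻¹ *ᵥ r := by
    rw [dot_mulVec_symm hMT, A1]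
  have A3 : e ⬝ᵥ M *ᵥ e = e ⬝ᵥ Om⁻¹ *ᵥ e + (C *ᵥ e) ⬝ᵥ R⁻¹ *ᵥ (C *ᵥ e) := by
    rw [hMdef, add_mulVec, dotProduct_add]
    congr 1
    rw [← mulVec_mulVec, ← mulVec_mulVec, dot_mulVec_trans, transpose_transpose]
  have A4 : b ⬝ᵥ M *ᵥ b = r ⬝ᵥ R⁻¹ *ᵥ r - r ⬝ᵥ Sm⁻¹ *ᵥ r := by
    rw [hMb, dot_mulVec_trans, transpose_transpose, hCb, sub_dotProduct]
    congr 1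
    calc ((R * Sm⁻¹) *ᵥ r) ⬝ᵥ R⁻¹ *ᵥ r
        = (R⁻¹ *ᵥ r) ⬝ᵥ ((R * Sm⁻¹) *ᵥ r) := dotProduct_comm _ _
      _ = ((R * Sm⁻¹)ᵀ *ᵥ (R⁻¹ *ᵥ r)) ⬝ᵥ r := dot_mulVec_trans _ _ _
      _ = r ⬝ᵥ Sm⁻¹ *ᵥ r := by
          rw [Matrix.transpose_mul, hSinvT, posDef_transpose_eq hR, mulVec_mulVec,
            Matrix.mul_assoc, posDef_mul_inv hR, Matrix.mul_one, dotProduct_comm]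
  have A5 : r ⬝ᵥ R⁻¹ *ᵥ (C *ᵥ e) = (C *ᵥ e) ⬝ᵥ R⁻¹ *ᵥ r := dot_mulVec_symm hRinvT _ _
  have hquad : (r - C *ᵥ e) ⬝ᵥ R⁻¹ *ᵥ (r - C *ᵥ e) + e ⬝ᵥ Om⁻¹ *ᵥ e =
      r ⬝ᵥ Sm⁻¹ *ᵥ r + (e - b) ⬝ᵥ M *ᵥ (e - b) := by
    simp only [mulVec_sub, dotProduct_sub, sub_dotProduct]
    linarith [A1, A2, A3, A4, A5]
  -- pdf product identity
  have hdets : R.det ^ (-(1:ℝ)/2) * Om.det ^ (-(1:ℝ)/2) =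
      Sm.det ^ (-(1:ℝ)/2) * Omp.det ^ (-(1:ℝ)/2) := by
    rw [← Real.mul_rpow hR.det_pos.le hOm.det_pos.le,
      ← Real.mul_rpow hS.det_pos.le hOmpPos.det_pos.le, hdet]
  have hprod : gaussPdf R (Y - C *ᵥ f) * gaussPdf Om (f - xi) =
      gaussPdf Sm (Y - C *ᵥ xi) * gaussPdf Omp (f - xip) := by
    rw [hfe, hfxip]
    unfold gaussPdf
    rw [hOmpInv]
    rw [show (Y - C *ᵥ xi) = r from rfl]
    have lhs_eq : ∀ (d1 d2 x1 x2 : ℝ),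
        ((2 * Real.pi) ^ (-(Fintype.card (Fin m) : ℝ) / 2) * d1 * Real.exp x1) *
        ((2 * Real.pi) ^ (-(Fintype.card (Fin n) : ℝ) / 2) * d2 * Real.exp x2) =
        ((2 * Real.pi) ^ (-(Fintype.card (Fin m) : ℝ) / 2) *
         (2 * Real.pi) ^ (-(Fintype.card (Fin n) : ℝ) / 2)) * (d1 * d2) * Real.exp (x1 + x2) := by
      intro d1 d2 x1 x2
      rw [Real.exp_add]; ring
    rw [lhs_eq, lhs_eq, hdets]
    congr 2
    linarith [hquad]
  -- CDF facts
  have hT : Depᵀ * (corrMat Omp)⁻¹ * (dMat Omp)⁻¹ = Deᵀ * (corrMat Om)⁻¹ * (dMat Om)⁻¹ := by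
    have hDepT : Depᵀ = Deᵀ * (corrMat Om)⁻¹ * (dMat Om)⁻¹ * dMat Omp * corrMat Omp := by
      rw [hDep]
      simp only [Matrix.transpose_mul, corrMat_inv_transpose_eq hOm, dMat_inv_transpose_eq,
        dMat_transpose, corrMat_transpose_eq hOmpPos]
      simp only [Matrix.mul_assoc]
    rw [hDepT]
    rw [Matrix.mul_assoc _ (corrMat Omp) ((corrMat Omp)⁻¹),
      posDef_mul_inv (corrMat_posDef hOmpPos), Matrix.mul_one,
      Matrix.mul_assoc _ (dMat Omp) ((dMat Omp)⁻¹), dMat_mul_inv hOmpPos, Matrix.mul_one]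
  have hK : Gap - Depᵀ * (corrMat Omp)⁻¹ * Dep = Ga - Deᵀ * (corrMat Om)⁻¹ * De := by
    rw [hGap]; abel
  have harg : gap + (Depᵀ * (corrMat Omp)⁻¹ * (dMat Omp)⁻¹) *ᵥ (f - xip) =
      ga + (Deᵀ * (corrMat Om)⁻¹ * (dMat Om)⁻¹) *ᵥ (f - xi) := by
    rw [hT, hgap, mulVec_sub, mulVec_sub, mulVec_sub]
    abel
  -- Gap posdef
  have hpart1 : (Ga - Deᵀ * (corrMat Om)⁻¹ * De).PosDef := by
    have h := schur_posDef Ga Deᵀ (corrMat Om) (corrMat_posDef hOm)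
      (by rwa [transpose_transpose])
    rwa [transpose_transpose] at h
  have hpart2 : (Depᵀ * (corrMat Omp)⁻¹ * Dep).PosSemidef := by
    have h := (corrMat_posDef hOmpPos).inv.posSemidef.conjTranspose_mul_mul_same Dep
    rwa [conjTranspose_eq_transpose_of_trivial] at h
  have hGapPos : Gap.PosDef := by
    rw [hGap]; exact hpart1.add_posSemidef hpart2
  have hw : gaussCdf Gap gap ≠ 0 := (gaussCdf_pos hGapPos gap).ne'
  -- assembly
  unfold sunPdf
  rw [hK, harg, ← mul_div_assoc, ← mul_div_assoc]
  exact div_assembly hw hprod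
end

section
/- (Selection representation of the unified skew-normal, Section 2.2 of the paper.) Let s, p ≥ 1, Γ ∈ ℝ^{s×s} and Ω̄ ∈ ℝ^{p×p} symmetric, Δ ∈ ℝ^{p×s}, γ ∈ ℝ^s, and assume M := [[Γ, Δᵀ],[Δ, Ω̄]] ∈ ℝ^{(s+p)×(s+p)} is positive definite. Then for every y ∈ ℝ^p, ∫_{{t ∈ ℝ^s : t_i + γ_i > 0 for all i}} φ_{s+p}((t, y); M) dt = φ_p(y; Ω̄) · Φ_s(γ + Δᵀ Ω̄⁻¹ y; Γ − Δᵀ Ω̄⁻¹ Δ). Consequently, if (x₀, x₁) is a centered Gaussian vector with covariance M, the conditional density of x₁ given the event {x₀ + γ > 0 componentwise} is y ↦ φ_p(y; Ω̄) · Φ_s(γ + Δᵀ Ω̄⁻¹ y; Γ − Δᵀ Ω̄⁻¹ Δ)/Φ_s(γ; Γ), i.e. the SUN_{p,s}(0, Ω̄, Δ, γ, Γ) density. -/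
open MeasureTheory Matrix

private lemma gaussPdf_neg {ι : Type*} [Fintype ι] [DecidableEq ι]
    (S : Matrix ι ι ℝ) (u : ι → ℝ) : gaussPdf S (-u) = gaussPdf S u := by
  unfold gaussPdf
  rw [Matrix.mulVec_neg, dotProduct_neg, neg_dotProduct, neg_neg]

/-- Selection representation of the unified skew-normal (Section 2.2). -/
theorem sun_selection_representation
    {s p : ℕ} (hs : 0 < s) (hp : 0 < p)
    (Ga : Matrix (Fin s) (Fin s) ℝ) (hGa : Ga.IsSymm)
    (Omb : Matrix (Fin p) (Fin p) ℝ) (hOmb : Omb.IsSymm)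
    (De : Matrix (Fin p) (Fin s) ℝ) (ga : Fin s → ℝ)
    (hM : (Matrix.fromBlocks Ga Deᵀ De Omb).PosDef) :
    ∀ y : Fin p → ℝ,
      (∫ t in {t : Fin s → ℝ | ∀ i, t i + ga i > 0},
          gaussPdf (Matrix.fromBlocks Ga Deᵀ De Omb) (Sum.elim t y)) =
        gaussPdf Omb y * gaussCdf (Ga - Deᵀ * Omb⁻¹ * De) (ga + (Deᵀ * Omb⁻¹) *ᵥ y) ∧
      (∫ t in {t : Fin s → ℝ | ∀ i, t i + ga i > 0},
          gaussPdf (Matrix.fromBlocks Ga Deᵀ De Omb) (Sum.elim t y)) / gaussCdf Ga ga =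
        gaussPdf Omb y * gaussCdf (Ga - Deᵀ * Omb⁻¹ * De) (ga + (Deᵀ * Omb⁻¹) *ᵥ y) /
          gaussCdf Ga ga := by
  intro y
  -- basic Hermitian facts
  have hOmbH : Omb.IsHermitian := by
    rwa [Matrix.IsHermitian, Matrix.conjTranspose_eq_transpose_of_trivial]
  have hGaH : Ga.IsHermitian := by
    rwa [Matrix.IsHermitian, Matrix.conjTranspose_eq_transpose_of_trivial]
  have hBH : (Deᵀ)ᴴ = De := by
    rw [Matrix.conjTranspose_eq_transpose_of_trivial, Matrix.transpose_transpose]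
  -- `Omb` is positive definite
  have hOmbPD : Omb.PosDef := by
    refine Matrix.PosDef.of_dotProduct_mulVec_pos hOmbH (fun x hx => ?_)
    have hz : (Sum.elim (0 : Fin s → ℝ) x) ≠ 0 := by
      intro h; apply hx; funext i; exact congrFun h (Sum.inr i)
    have h2 := hM.dotProduct_mulVec_pos hz
    simpa [Matrix.fromBlocks_mulVec, sumElim_dotProduct_sumElim] using h2
  haveI iO : Invertible Omb := hOmbPD.isUnit.invertible
  -- the Schur complement is positive definite
  have hOi_symm : (Omb⁻¹)ᵀ = Omb⁻¹ := by
    rw [Matrix.transpose_nonsing_inv, hOmb.eq]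
  have hSig_symm : (Ga - Deᵀ * Omb⁻¹ * De)ᵀ = Ga - Deᵀ * Omb⁻¹ * De := by
    rw [Matrix.transpose_sub, hGa.eq, Matrix.transpose_mul, Matrix.transpose_mul,
      Matrix.transpose_transpose, hOi_symm, Matrix.mul_assoc]
  have hSigPD : (Ga - Deᵀ * Omb⁻¹ * De).PosDef := by
    have hSigH : (Ga - Deᵀ * Omb⁻¹ * De).IsHermitian := by
      rwa [Matrix.IsHermitian, Matrix.conjTranspose_eq_transpose_of_trivial]
    refine Matrix.PosDef.of_dotProduct_mulVec_pos hSigH (fun x hx => ?_)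
    have key := Matrix.schur_complement_eq₂₂ (α := ℝ) Ga Deᵀ x (-((Omb⁻¹ * (Deᵀ)ᴴ) *ᵥ x)) hOmbH
    rw [hBH] at key
    simp only [star_trivial, add_neg_cancel] at key
    have hz : (Sum.elim x (-((Omb⁻¹ * De) *ᵥ x))) ≠ 0 := by
      intro h; apply hx; funext i; exact congrFun h (Sum.inl i)
    have h2 := hM.dotProduct_mulVec_pos hz
    rw [star_trivial, Matrix.dotProduct_mulVec, key] at h2
    simpa [Matrix.dotProduct_mulVec] using h2
  haveI iS : Invertible (Ga - Deᵀ * Omb⁻¹ * De) := hSigPD.isUnit.invertible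
  haveI iM : Invertible (Matrix.fromBlocks Ga Deᵀ De Omb) := hM.isUnit.invertible
  set Si := (Ga - Deᵀ * Omb⁻¹ * De)⁻¹ with hSi
  set Oi := Omb⁻¹ with hOi
  have hdetS : IsUnit (Ga - Deᵀ * Omb⁻¹ * De).det := hSigPD.det_pos.ne'.isUnit
  -- the inverse of the block matrix
  have hMinv : (Matrix.fromBlocks Ga Deᵀ De Omb)⁻¹ =
      Matrix.fromBlocks Si (-(Si * Deᵀ * Oi)) (-(Oi * De * Si))
        (Oi + Oi * De * Si * Deᵀ * Oi) := by
    haveI : Invertible (Ga - Deᵀ * ⅟Omb * De) := by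
      rw [invOf_eq_nonsing_inv]; exact iS
    rw [← invOf_eq_nonsing_inv, Matrix.invOf_fromBlocks₂₂_eq]
    simp only [invOf_eq_nonsing_inv]
    rfl
  have hSi_symm : Siᵀ = Si := by
    rw [hSi, Matrix.transpose_nonsing_inv, hSig_symm]
  have hSiH : Si.IsHermitian := by
    rwa [Matrix.IsHermitian, Matrix.conjTranspose_eq_transpose_of_trivial]
  haveI iSi : Invertible Si := (Matrix.isUnit_nonsing_inv_iff.2 hSigPD.isUnit).invertible
  have hSi_inv : Si⁻¹ = Ga - Deᵀ * Omb⁻¹ * De := Matrix.nonsing_inv_nonsing_inv _ hdetS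
  set μ := (Deᵀ * Oi) *ᵥ y with hmu
  -- quadratic form decomposition
  have hquad : ∀ t : Fin s → ℝ,
      Sum.elim t y ⬝ᵥ (Matrix.fromBlocks Ga Deᵀ De Omb)⁻¹ *ᵥ Sum.elim t y =
        (t - μ) ⬝ᵥ Si *ᵥ (t - μ) + y ⬝ᵥ Oi *ᵥ y := by
    intro t
    have hBH' : (-(Si * Deᵀ * Oi))ᴴ = -(Oi * De * Si) := by
      rw [Matrix.conjTranspose_eq_transpose_of_trivial]
      rw [Matrix.transpose_neg, Matrix.transpose_mul, Matrix.transpose_mul,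
        Matrix.transpose_transpose, hOi_symm, hSi_symm, Matrix.mul_assoc]
    have key := Matrix.schur_complement_eq₁₁ (α := ℝ)
      (-(Si * Deᵀ * Oi)) (Oi + Oi * De * Si * Deᵀ * Oi) t y hSiH
    rw [hBH'] at key
    have e1 : Si⁻¹ * -(Si * Deᵀ * Oi) = -(Deᵀ * Oi) := by
      rw [hSi_inv, Matrix.mul_neg, ← Matrix.mul_assoc, ← Matrix.mul_assoc,
        Matrix.mul_nonsing_inv _ hdetS, Matrix.one_mul]
    have e2 : (Oi + Oi * De * Si * Deᵀ * Oi) - (-(Oi * De * Si)) * Si⁻¹ * (-(Si * Deᵀ * Oi))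
        = Oi := by
      rw [Matrix.neg_mul, Matrix.mul_inv_cancel_right_of_invertible]
      simp only [Matrix.neg_mul, Matrix.mul_neg, neg_neg, Matrix.mul_assoc]
      exact add_sub_cancel_right _ _
    rw [e1, e2] at key
    simp only [star_trivial] at key
    rw [hMinv, Matrix.dotProduct_mulVec, key]
    simp only [Matrix.neg_mulVec, ← sub_eq_add_neg, ← Matrix.dotProduct_mulVec]
    rfl
  -- density factorization
  have hfact : ∀ t : Fin s → ℝ,
      gaussPdf (Matrix.fromBlocks Ga Deᵀ De Omb) (Sum.elim t y) =
        gaussPdf Omb y * gaussPdf (Ga - Deᵀ * Omb⁻¹ * De) (t - μ) := by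
    intro t
    unfold gaussPdf
    have hcard : ((Fintype.card (Fin s ⊕ Fin p) : ℕ) : ℝ) = (s : ℝ) + p := by simp
    have hdet : (Matrix.fromBlocks Ga Deᵀ De Omb).det =
        Omb.det * (Ga - Deᵀ * Omb⁻¹ * De).det := by
      have h := Matrix.det_fromBlocks₂₂ Ga Deᵀ De Omb
      rwa [invOf_eq_nonsing_inv] at h
    rw [hquad t, hdet, hcard]
    rw [Real.mul_rpow hOmbPD.det_pos.le hSigPD.det_pos.le]
    rw [show -((s:ℝ)+p)/2 = (-(p:ℝ)/2) + (-(s:ℝ)/2) by ring]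
    rw [Real.rpow_add (by positivity)]
    rw [show (-(1/2 : ℝ)) * ((t - μ) ⬝ᵥ Si *ᵥ (t - μ) + y ⬝ᵥ Oi *ᵥ y)
        = (-(1/2 : ℝ)) * (y ⬝ᵥ Oi *ᵥ y) + (-(1/2 : ℝ)) * ((t - μ) ⬝ᵥ Si *ᵥ (t - μ)) by ring]
    rw [Real.exp_add]
    simp only [Fintype.card_fin]
    ring
  -- integral computation
  have hint : (∫ t in {t : Fin s → ℝ | ∀ i, t i + ga i > 0},
      gaussPdf (Ga - Deᵀ * Omb⁻¹ * De) (t - μ)) =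
      gaussCdf (Ga - Deᵀ * Omb⁻¹ * De) (ga + μ) := by
    have step1 : (∫ t in {t : Fin s → ℝ | ∀ i, t i + ga i > 0},
        gaussPdf (Ga - Deᵀ * Omb⁻¹ * De) (t - μ)) =
        ∫ u in {u : Fin s → ℝ | ∀ i, u i + (ga i + μ i) > 0},
          gaussPdf (Ga - Deᵀ * Omb⁻¹ * De) u := by
      have h := (measurePreserving_add_right volume μ).setIntegral_preimage_emb
        (measurableEmbedding_addRight μ)
        (fun t => gaussPdf (Ga - Deᵀ * Omb⁻¹ * De) (t - μ))
        {t : Fin s → ℝ | ∀ i, t i + ga i > 0}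
      rw [← h]
      have hset : (fun u : Fin s → ℝ => u + μ) ⁻¹' {t : Fin s → ℝ | ∀ i, t i + ga i > 0} =
          {u : Fin s → ℝ | ∀ i, u i + (ga i + μ i) > 0} := by
        ext u
        simp only [Set.mem_preimage, Set.mem_setOf_eq, Pi.add_apply]
        constructor
        · intro h i; have := h i; linarith
        · intro h i; have := h i; linarith
      rw [hset]
      congr 1
      funext u
      rw [add_sub_cancel_right]
    have step2 : (∫ u in {u : Fin s → ℝ | ∀ i, u i + (ga i + μ i) > 0},
        gaussPdf (Ga - Deᵀ * Omb⁻¹ * De) u) =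
        ∫ v in {v : Fin s → ℝ | ∀ i, v i < ga i + μ i},
          gaussPdf (Ga - Deᵀ * Omb⁻¹ * De) v := by
      have h := (Measure.measurePreserving_neg (volume : Measure (Fin s → ℝ))).setIntegral_preimage_emb
        (MeasurableEquiv.neg (Fin s → ℝ)).measurableEmbedding
        (gaussPdf (Ga - Deᵀ * Omb⁻¹ * De))
        {v : Fin s → ℝ | ∀ i, v i < ga i + μ i}
      rw [← h]
      have hset : (Neg.neg : (Fin s → ℝ) → (Fin s → ℝ)) ⁻¹'
          {v : Fin s → ℝ | ∀ i, v i < ga i + μ i} =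
          {u : Fin s → ℝ | ∀ i, u i + (ga i + μ i) > 0} := by
        ext u
        simp only [Set.mem_preimage, Set.mem_setOf_eq, Pi.neg_apply]
        constructor
        · intro h i; have := h i; linarith
        · intro h i; have := h i; linarith
      rw [hset]
      congr 1
      funext u
      exact (gaussPdf_neg _ u).symm
    have step3 : (∫ v in {v : Fin s → ℝ | ∀ i, v i < ga i + μ i},
        gaussPdf (Ga - Deᵀ * Omb⁻¹ * De) v) =
        gaussCdf (Ga - Deᵀ * Omb⁻¹ * De) (ga + μ) := by
      have hae : {v : Fin s → ℝ | ∀ i, v i < ga i + μ i} =ᵐ[volume]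
          {v : Fin s → ℝ | ∀ i, v i ≤ (ga + μ) i} := by
        have h : ∀ᵐ v : Fin s → ℝ ∂volume, ∀ i, v i ≠ ga i + μ i := by
          rw [MeasureTheory.ae_all_iff]
          intro i
          have := MeasureTheory.Measure.ae_eval_ne (fun _ : Fin s => (volume : Measure ℝ)) i
            (ga i + μ i)
          rwa [← MeasureTheory.volume_pi] at this
        refine Filter.eventuallyEq_set.2 ?_
        filter_upwards [h] with v hv
        simp only [Set.mem_setOf_eq, Pi.add_apply]
        exact ⟨fun h' i => (h' i).le, fun h' i => lt_of_le_of_ne (h' i) (hv i)⟩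
      rw [MeasureTheory.setIntegral_congr_set hae]
      rfl
    rw [step1, step2, step3]
  -- final assembly
  have main : (∫ t in {t : Fin s → ℝ | ∀ i, t i + ga i > 0},
      gaussPdf (Matrix.fromBlocks Ga Deᵀ De Omb) (Sum.elim t y)) =
      gaussPdf Omb y * gaussCdf (Ga - Deᵀ * Omb⁻¹ * De) (ga + (Deᵀ * Omb⁻¹) *ᵥ y) := by
    calc (∫ t in {t : Fin s → ℝ | ∀ i, t i + ga i > 0},
        gaussPdf (Matrix.fromBlocks Ga Deᵀ De Omb) (Sum.elim t y))
        = ∫ t in {t : Fin s → ℝ | ∀ i, t i + ga i > 0},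
            gaussPdf Omb y * gaussPdf (Ga - Deᵀ * Omb⁻¹ * De) (t - μ) := by
          simp only [hfact]
      _ = gaussPdf Omb y * ∫ t in {t : Fin s → ℝ | ∀ i, t i + ga i > 0},
            gaussPdf (Ga - Deᵀ * Omb⁻¹ * De) (t - μ) := integral_const_mul _ _
      _ = gaussPdf Omb y * gaussCdf (Ga - Deᵀ * Omb⁻¹ * De) (ga + μ) := by rw [hint]
  exact ⟨main, by rw [main]⟩
end

section
/- (Well-definedness of the posterior SUN parameters under the probit affine likelihood, implicit in Lemma 2.) Let n, m, s ≥ 1, Ω ∈ ℝ^{n×n} symmetric positive definite with Ω = D_Ω Ω̄ D_Ω, Δ ∈ ℝ^{n×s}, Γ ∈ ℝ^{s×s} symmetric, W ∈ ℝ^{m×n}, Σ ∈ ℝ^{m×m} symmetric positive definite. Assume M := [[Γ, Δᵀ],[Δ, Ω̄]] is positive definite. Define Δ_p := [Δ, Ω̄ D_Ω Wᵀ] ∈ ℝ^{n×(s+m)} and Γ_p := [[Γ, Δᵀ D_Ω Wᵀ],[W D_Ω Δ, W Ω Wᵀ + Σ]] ∈ ℝ^{(s+m)×(s+m)}. Then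 the block matrix M_p := [[Γ_p, Δ_pᵀ],[Δ_p, Ω̄]] ∈ ℝ^{(s+m+n)×(s+m+n)} is positive definite; in particular Γ_p and Γ_p − Δ_pᵀ Ω̄⁻¹ Δ_p are positive definite, so the posterior SUN_{n,s+m}(ξ, Ω, Δ_p, γ_p, Γ_p) density of Lemma 2 is well defined. -/
open MeasureTheory Matrix

/-- Diagonal-block extraction: the `(2,2)` block of a positive definite block matrix
is positive definite. -/
lemma posDef_of_fromBlocks₂₂ {p q : Type*} [Fintype p] [Fintype q]
    [DecidableEq p] [DecidableEq q]
    {A : Matrix p p ℝ} {B : Matrix p q ℝ} {C : Matrix q p ℝ} {D : Matrix q q ℝ}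
    (h : (Matrix.fromBlocks A B C D).PosDef) : D.PosDef := by
  rw [posDef_iff_dotProduct_mulVec]
  constructor
  · have := h.1
    rw [Matrix.isHermitian_fromBlocks_iff] at this
    exact this.2.2.2
  · intro y hy
    have hv : (Sum.elim (0 : p → ℝ) y) ≠ 0 := by
      intro hc
      apply hy
      funext i
      exact congrFun hc (Sum.inr i)
    have := h.dotProduct_mulVec_pos hv
    simpa [Matrix.fromBlocks_mulVec, sumElim_dotProduct_sumElim] using this

/-- Real version of the positive-definiteness criterion via the Schur complement of
the `(2,2)` block. -/
lemma posDef_fromBlocks₂₂_iff {p q : Type*} [Fintype p] [Fintype q]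
    [DecidableEq p] [DecidableEq q]
    (A : Matrix p p ℝ) (B : Matrix p q ℝ) {D : Matrix q q ℝ} (hD : D.PosDef) :
    (Matrix.fromBlocks A B Bᴴ D).PosDef ↔ (A - B * D⁻¹ * Bᴴ).PosDef := by
  haveI : Invertible D := hD.isUnit.invertible
  constructor
  · intro h
    refine posDef_iff_dotProduct_mulVec.mpr ⟨?_, fun x hx => ?_⟩
    · exact (Matrix.IsHermitian.fromBlocks₂₂ A B hD.1).mp h.1
    · have hv : (Sum.elim x (-((D⁻¹ * Bᴴ) *ᵥ x))) ≠ 0 := by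
        intro hc
        apply hx
        funext i
        exact congrFun hc (Sum.inl i)
      have := h.dotProduct_mulVec_pos hv
      rw [dotProduct_mulVec,
        Matrix.schur_complement_eq₂₂ A B _ _ hD.1] at this
      simpa [dotProduct_mulVec] using this
  · intro h
    refine posDef_iff_dotProduct_mulVec.mpr ⟨(Matrix.IsHermitian.fromBlocks₂₂ A B hD.1).mpr h.1, fun v hv => ?_⟩
    rw [dotProduct_mulVec, ← Sum.elim_comp_inl_inr v,
      Matrix.schur_complement_eq₂₂ A B _ _ hD.1]
    by_cases hx : v ∘ Sum.inl = 0
    · have hy : v ∘ Sum.inr ≠ 0 := by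
        intro hc
        apply hv
        rw [← Sum.elim_comp_inl_inr v, hx, hc]
        ext (i | i) <;> rfl
      have h1 := hD.dotProduct_mulVec_pos hy
      rw [star_trivial, dotProduct_mulVec] at h1
      simpa [hx, dotProduct_mulVec] using h1
    · have h2 := h.dotProduct_mulVec_pos hx
      rw [star_trivial, dotProduct_mulVec] at h2
      have h1 : (0:ℝ) ≤ star ((D⁻¹ * Bᴴ) *ᵥ (v ∘ Sum.inl) + v ∘ Sum.inr) ᵥ* D ⬝ᵥ
          ((D⁻¹ * Bᴴ) *ᵥ (v ∘ Sum.inl) + v ∘ Sum.inr) := by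
        rw [← dotProduct_mulVec]
        exact hD.posSemidef.dotProduct_mulVec_nonneg _
      simp only [star_trivial] at h1 h2 ⊢
      linarith

/-- Well-definedness of the posterior SUN parameters under the probit affine likelihood
(implicit in Lemma 2). -/
theorem sun_probit_affine_posterior_well_defined
    {n m s : ℕ} (hn : 0 < n) (hm : 0 < m) (hs : 0 < s)
    (Om : Matrix (Fin n) (Fin n) ℝ) (hOm : Om.PosDef)
    (De : Matrix (Fin n) (Fin s) ℝ)
    (Ga : Matrix (Fin s) (Fin s) ℝ) (hGa : Ga.IsSymm)
    (W : Matrix (Fin m) (Fin n) ℝ) (Sg : Matrix (Fin m) (Fin m) ℝ) (hSg : Sg.PosDef)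
    (hM : (Matrix.fromBlocks Ga Deᵀ De (corrMat Om)).PosDef)
    (Dep : Matrix (Fin n) (Fin s ⊕ Fin m) ℝ)
    (Gap : Matrix (Fin s ⊕ Fin m) (Fin s ⊕ Fin m) ℝ)
    (hDep : Dep = Matrix.fromCols De (corrMat Om * dMat Om * Wᵀ))
    (hGap : Gap = Matrix.fromBlocks Ga (Deᵀ * dMat Om * Wᵀ) (W * dMat Om * De)
      (W * Om * Wᵀ + Sg)) :
    (Matrix.fromBlocks Gap Depᵀ Dep (corrMat Om)).PosDef ∧
      Gap.PosDef ∧ (Gap - Depᵀ * (corrMat Om)⁻¹ * Dep).PosDef := by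
  have hOb : (corrMat Om).PosDef := posDef_of_fromBlocks₂₂ hM
  have hObdet : IsUnit (corrMat Om).det := hOb.det_pos.ne'.isUnit
  -- diagonal entries of Om are positive
  have hdiag : ∀ i, 0 < Om i i := by
    intro i
    have h := hOm.dotProduct_mulVec_pos (x := Pi.single i 1)
      (fun hc => by simpa using congrFun hc i)
    simpa using h
  have hDmdet : IsUnit (dMat Om).det := by
    rw [dMat, Matrix.det_diagonal]
    refine (Finset.prod_pos fun i _ => Real.sqrt_pos.mpr (hdiag i)).ne'.isUnit
  have hDmT : (dMat Om)ᵀ = dMat Om := Matrix.diagonal_transpose _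
  have hOmT : Omᵀ = Om := by
    have h := hOm.1
    rw [Matrix.IsHermitian, Matrix.conjTranspose_eq_transpose_of_trivial] at h
    exact h
  have hObT : (corrMat Om)ᵀ = corrMat Om := by
    rw [corrMat, Matrix.transpose_mul, Matrix.transpose_mul,
      Matrix.transpose_nonsing_inv, hDmT, hOmT, Matrix.mul_assoc]
  -- Om = Dm (Ob Dm)
  have hOmfact : dMat Om * (corrMat Om * dMat Om) = Om := by
    rw [corrMat, Matrix.mul_assoc, Matrix.nonsing_inv_mul _ hDmdet, Matrix.mul_one,
      Matrix.mul_nonsing_inv_cancel_left _ _ hDmdet]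
  -- the transpose of Dep
  have hDepT : Depᵀ = Matrix.fromRows Deᵀ (W * (dMat Om * corrMat Om)) := by
    rw [hDep, Matrix.transpose_fromCols, Matrix.transpose_mul, Matrix.transpose_mul,
      Matrix.transpose_transpose, hDmT, hObT]
  have hOmfact2 : ∀ (X : Matrix (Fin n) (Fin m) ℝ),
      dMat Om * (corrMat Om * (dMat Om * X)) = Om * X := by
    intro X
    conv_rhs => rw [← hOmfact]
    simp only [Matrix.mul_assoc]
  -- the Schur-complement correction term
  have hS : Depᵀ * (corrMat Om)⁻¹ * Dep =
      Matrix.fromBlocks (Deᵀ * ((corrMat Om)⁻¹ * De)) (Deᵀ * (dMat Om * Wᵀ))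
        (W * (dMat Om * De)) (W * (Om * Wᵀ)) := by
    rw [hDepT, hDep, Matrix.fromRows_mul, Matrix.fromRows_mul_fromCols]
    simp only [Matrix.mul_assoc, Matrix.nonsing_inv_mul_cancel_left _ _ hObdet,
      Matrix.mul_nonsing_inv_cancel_left _ _ hObdet, hOmfact2]
  have hDeH : (Deᵀ)ᴴ = De := by
    rw [Matrix.conjTranspose_eq_transpose_of_trivial, Matrix.transpose_transpose]
  have hGaS : (Ga - Deᵀ * (corrMat Om)⁻¹ * De).PosDef := by
    have h := (posDef_fromBlocks₂₂_iff Ga Deᵀ hOb).mp (by rwa [hDeH])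
    rwa [hDeH] at h
  have hSchurEq : Gap - Depᵀ * (corrMat Om)⁻¹ * Dep =
      Matrix.fromBlocks (Ga - Deᵀ * (corrMat Om)⁻¹ * De) 0 0 Sg := by
    rw [hS, hGap, sub_eq_add_neg, Matrix.fromBlocks_neg, Matrix.fromBlocks_add,
      Matrix.fromBlocks_inj]
    refine ⟨by rw [sub_eq_add_neg, Matrix.mul_assoc], ?_, ?_, ?_⟩
    · rw [Matrix.mul_assoc]; abel
    · rw [Matrix.mul_assoc]; abel
    · rw [Matrix.mul_assoc]; abel
  have h3 : (Gap - Depᵀ * (corrMat Om)⁻¹ * Dep).PosDef := by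
    rw [hSchurEq]
    have h := (posDef_fromBlocks₂₂_iff (Ga - Deᵀ * (corrMat Om)⁻¹ * De)
      (0 : Matrix (Fin s) (Fin m) ℝ) hSg).mpr (by simpa using hGaS)
    simpa using h
  have hDepH : (Depᵀ)ᴴ = Dep := by
    rw [Matrix.conjTranspose_eq_transpose_of_trivial, Matrix.transpose_transpose]
  have h1 : (Matrix.fromBlocks Gap Depᵀ Dep (corrMat Om)).PosDef := by
    have h := (posDef_fromBlocks₂₂_iff Gap Depᵀ hOb).mpr (by rwa [hDepH])
    rwa [hDepH] at h
  have hSpsd : (Depᵀ * (corrMat Om)⁻¹ * Dep).PosSemidef := by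
    have h := hOb.inv.posSemidef.conjTranspose_mul_mul_same Dep
    rwa [Matrix.conjTranspose_eq_transpose_of_trivial] at h
  have h2 : Gap.PosDef := by
    have h := h3.add_posSemidef hSpsd
    rwa [show Gap - Depᵀ * (corrMat Om)⁻¹ * Dep + Depᵀ * (corrMat Om)⁻¹ * Dep = Gap
      from by abel] at h
  exact ⟨h1, h2, h3⟩
end
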